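/- If 0 < b < 27/4 and Ψ : [0,∞) → (0,∞) satisfies -ln(Ψ(s)/Ψ(0)) = ∫₀^s dx/(x + b(1 - x^{1/3})), then Ψ(s) ~ C/s as s → ∞ for some constant C > 0; in particular ∫₀^∞ Ψ(s) ds = ∞. -/

import Mathlib

open Set Filter Topology MeasureTheory intervalIntegral Real

lemma aux_cbrt_cube {x : ℝ} (hx : 0 ≤ x) : (x ^ ((1:ℝ)/3)) ^ (3:ℕ) = x := by
  rw [← Real.rpow_natCast (x ^ ((1:ℝ)/3)) 3, ← Real.rpow_mul hx]
  norm_num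

lemma aux_fpos (b : ℝ) (hb0 : 0 < b) (hb : b < 27/4) {x : ℝ} (hx : 0 ≤ x) :
    0 < x + b * (1 - x ^ ((1:ℝ)/3)) := by
  have ht0 : 0 ≤ x ^ ((1:ℝ)/3) := Real.rpow_nonneg hx _
  have ht3 := aux_cbrt_cube hx
  set t := x ^ ((1:ℝ)/3)
  rw [← ht3]
  rcases le_or_gt t 1 with h | h
  · rcases eq_or_lt_of_le ht0 with h0 | h0
    · simp [← h0]; linarith
    · nlinarith [pow_pos h0 3, mul_nonneg hb0.le (sub_nonneg.2 h)]
  · nlinarith [mul_nonneg (sq_nonneg (2*t-3)) (by linarith : (0:ℝ) ≤ t+3),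
      mul_pos (sub_pos.2 h) (by linarith : (0:ℝ) < 27/4 - b)]

lemma aux_cont_cbrt : Continuous fun x : ℝ => x ^ ((1:ℝ)/3) :=
  continuous_iff_continuousAt.2 fun x => Real.continuousAt_rpow_const x _ (Or.inr (by norm_num))

theorem selfsimilar_profile_infinite_volume
    (b : ℝ) (hb0 : 0 < b) (hb : b < 27/4)
    (Ψ : ℝ → ℝ) (hΨ_pos : ∀ s, 0 ≤ s → 0 < Ψ s)
    (hΨ : ∀ s, 0 ≤ s →
      -Real.log (Ψ s / Ψ 0) =
        ∫ x in (0:ℝ)..s, 1 / (x + b * (1 - x ^ ((1:ℝ)/3)))) :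
    (∃ C : ℝ, 0 < C ∧ Tendsto (fun s => Ψ s * s) atTop (𝓝 C)) ∧
    ¬ IntegrableOn Ψ (Set.Ioi 0) := by
  set f : ℝ → ℝ := fun x => x + b * (1 - x ^ ((1:ℝ)/3)) with hf_def
  have hf_pos : ∀ x, 0 ≤ x → 0 < f x := fun x hx => aux_fpos b hb0 hb hx
  have hf_cont : Continuous f :=
    continuous_id.add (continuous_const.mul (continuous_const.sub aux_cont_cbrt))
  have hxb_pos : ∀ x : ℝ, 0 ≤ x → 0 < x + b := fun x hx => by linarith
  have h1f_cont : ContinuousOn (fun x => 1 / f x) (Ici 0) :=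
    continuousOn_const.div hf_cont.continuousOn (fun x hx => (hf_pos x hx).ne')
  have h1xb_cont : ContinuousOn (fun x : ℝ => 1 / (x + b)) (Ici 0) :=
    continuousOn_const.div (by fun_prop) (fun x hx => (hxb_pos x hx).ne')
  set g : ℝ → ℝ := fun x => 1 / f x - 1 / (x + b) with hg_def
  have hg_cont : ContinuousOn g (Ici 0) := h1f_cont.sub h1xb_cont
  have hg_eq : ∀ x, 0 ≤ x → g x = b * x ^ ((1:ℝ)/3) / (f x * (x + b)) := by
    intro x hx
    have h1 := (hf_pos x hx).ne'
    have h2 := (hxb_pos x hx).ne'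
    rw [hg_def]
    field_simp
    rw [hf_def]
    ring
  have hg_nonneg : ∀ x, 0 ≤ x → 0 ≤ g x := by
    intro x hx
    rw [hg_eq x hx]
    exact div_nonneg (mul_nonneg hb0.le (Real.rpow_nonneg hx _))
      (mul_nonneg (hf_pos x hx).le (hxb_pos x hx).le)
  -- bound for large x
  set X : ℝ := (1 + 2*b)^3 with hX_def
  have hX1 : 1 ≤ X := by rw [hX_def]; nlinarith [mul_pos hb0 hb0, mul_pos (mul_pos hb0 hb0) hb0]
  have hX0 : 0 < X := lt_of_lt_of_le one_pos hX1
  have hbound : ∀ x ∈ Ioi X, g x ≤ 2*b * x ^ (-(5:ℝ)/3) := by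
    intro x hx
    have hxX : X < x := hx
    have hx0 : 0 < x := lt_trans hX0 hxX
    have ht1 : 1 + 2*b ≤ x ^ ((1:ℝ)/3) := by
      have h3 : ((1+2*b)^3 : ℝ) ^ ((1:ℝ)/3) = 1 + 2*b := by
        rw [← Real.rpow_natCast (1+2*b) 3, ← Real.rpow_mul (by linarith)]
        norm_num
      calc 1 + 2*b = ((1+2*b)^3 : ℝ) ^ ((1:ℝ)/3) := h3.symm
        _ ≤ x ^ ((1:ℝ)/3) := Real.rpow_le_rpow (by positivity) (le_of_lt hxX) (by norm_num)
    have ht3 := aux_cbrt_cube hx0.le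
    set t := x ^ ((1:ℝ)/3) with ht_def
    have ht0 : 0 < t := by linarith
    have h2b : 2*b ≤ t^2 := by nlinarith [sq_nonneg (t-1)]
    have hbt : b * t ≤ x / 2 := by nlinarith [mul_le_mul_of_nonneg_left h2b ht0.le]
    have hfx : x / 2 ≤ f x := by
      have : f x = x + b * (1 - t) := rfl
      nlinarith
    have hd : x / 2 * x ≤ f x * (x + b) :=
      mul_le_mul hfx (by linarith) hx0.le (hf_pos x hx0.le).le
    have h5 : g x ≤ b * t / (x/2 * x) := by
      rw [hg_eq x hx0.le]
      exact div_le_div_of_nonneg_left (mul_nonneg hb0.le ht0.le) (by positivity) hd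
    have h6 : b * t / (x/2 * x) = 2*b * (t / x^2) := by
      field_simp
    have h7 : x ^ (-(5:ℝ)/3) = t / x^2 := by
      rw [ht_def, ← Real.rpow_natCast x 2, ← Real.rpow_sub hx0]
      norm_num
    rw [h7]
    calc g x ≤ b * t / (x/2 * x) := h5
      _ = 2*b * (t / x^2) := h6
  -- integrability of g on Ioi 0
  have hg_int : IntegrableOn g (Ioi 0) := by
    have h1 : IntegrableOn g (Ioc 0 X) := by
      have : IntegrableOn g (Icc 0 X) :=
        (hg_cont.mono (fun y hy => hy.1)).integrableOn_Icc
      exact this.mono_set Ioc_subset_Icc_self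
    have h2 : IntegrableOn (fun x : ℝ => 2*b * x ^ (-(5:ℝ)/3)) (Ioi X) :=
      (integrableOn_Ioi_rpow_of_lt (by norm_num) hX0).const_mul (2*b)
    have h3 : IntegrableOn g (Ioi X) := by
      apply Integrable.mono' h2
      · exact (hg_cont.mono (fun y (hy : X < y) => le_of_lt (lt_of_lt_of_le (lt_of_lt_of_le hX0 hy.le) le_rfl))).aestronglyMeasurable measurableSet_Ioi
      · filter_upwards [ae_restrict_mem measurableSet_Ioi] with x hx
        have hx0 : 0 ≤ x := (lt_trans hX0 hx).le
        rw [Real.norm_of_nonneg (hg_nonneg x hx0)]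
        exact hbound x hx
    have := h1.union h3
    rwa [Ioc_union_Ioi_eq_Ioi hX0.le] at this
  set L : ℝ := ∫ x in Ioi 0, g x with hL_def
  have hG_tend : Tendsto (fun s => ∫ x in (0:ℝ)..s, g x) atTop (𝓝 L) :=
    intervalIntegral_tendsto_integral_Ioi 0 hg_int tendsto_id
  -- split the integral
  have hsplit : ∀ s, 0 ≤ s → (∫ x in (0:ℝ)..s, 1 / f x)
      = Real.log ((s+b)/b) + ∫ x in (0:ℝ)..s, g x := by
    intro s hs
    have hsub : uIcc (0:ℝ) s ⊆ Ici 0 := by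
      rw [uIcc_of_le hs]; exact Icc_subset_Ici_self
    have hint1 : IntervalIntegrable (fun x : ℝ => 1/(x+b)) volume 0 s :=
      (h1xb_cont.mono hsub).intervalIntegrable
    have hintg : IntervalIntegrable g volume 0 s := (hg_cont.mono hsub).intervalIntegrable
    have heq : (fun x : ℝ => 1 / f x) = fun x => 1/(x+b) + g x := by
      funext x; rw [hg_def]; ring
    rw [heq, intervalIntegral.integral_add hint1 hintg]
    congr 1
    have h1 : (∫ x in (0:ℝ)..s, 1/(x+b)) = ∫ x in (0+b)..(s+b), 1/x :=
      intervalIntegral.integral_comp_add_right (fun u => 1/u) b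
    rw [h1, zero_add, integral_one_div]
    intro h0
    rw [uIcc_of_le (by linarith)] at h0
    exact absurd h0.1 (by linarith)
  -- formula for Ψ
  have hΨ0 : 0 < Ψ 0 := hΨ_pos 0 le_rfl
  have hform : ∀ s, 0 ≤ s →
      Ψ s = Ψ 0 * Real.exp (-(Real.log ((s+b)/b) + ∫ x in (0:ℝ)..s, g x)) := by
    intro s hs
    have h1 := hΨ s hs
    rw [show (∫ x in (0:ℝ)..s, 1 / (x + b * (1 - x ^ ((1:ℝ)/3)))) = ∫ x in (0:ℝ)..s, 1 / f x from rfl,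
      hsplit s hs] at h1
    have h2 : Real.log (Ψ s / Ψ 0) = -(Real.log ((s+b)/b) + ∫ x in (0:ℝ)..s, g x) := by
      linarith
    have h3 : Ψ s / Ψ 0 = Real.exp (-(Real.log ((s+b)/b) + ∫ x in (0:ℝ)..s, g x)) := by
      rw [← h2, Real.exp_log (div_pos (hΨ_pos s hs) hΨ0)]
    rw [div_eq_iff hΨ0.ne'] at h3
    rw [h3]; ring
  -- the limit
  have hmain : Tendsto (fun s => Ψ s * s) atTop (𝓝 (Ψ 0 * Real.exp (-L) * b)) := by
    have hexp : Tendsto (fun s : ℝ => Real.exp (-(∫ x in (0:ℝ)..s, g x))) atTop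
        (𝓝 (Real.exp (-L))) :=
      (Real.continuous_exp.tendsto _).comp hG_tend.neg
    have hsb : Tendsto (fun s : ℝ => s + b) atTop atTop :=
      tendsto_atTop_add_const_right _ b tendsto_id
    have h0 : Tendsto (fun s : ℝ => b / (s+b)) atTop (𝓝 0) :=
      Tendsto.div_atTop tendsto_const_nhds hsb
    have hfrac : Tendsto (fun s : ℝ => s / (s+b)) atTop (𝓝 1) := by
      have h1 : Tendsto (fun s : ℝ => 1 - b/(s+b)) atTop (𝓝 (1 - 0)) :=
        tendsto_const_nhds.sub h0
      rw [sub_zero] at h1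
      apply h1.congr'
      filter_upwards [eventually_gt_atTop 0] with s hs
      have : s + b ≠ 0 := by linarith
      field_simp
      ring
    have h2 : Tendsto (fun s : ℝ =>
        Ψ 0 * Real.exp (-(∫ x in (0:ℝ)..s, g x)) * b * (s / (s+b))) atTop
        (𝓝 (Ψ 0 * Real.exp (-L) * b * 1)) :=
      (((tendsto_const_nhds.mul hexp).mul tendsto_const_nhds).mul hfrac)
    rw [mul_one] at h2
    apply h2.congr'
    filter_upwards [eventually_ge_atTop 0] with s hs
    rw [hform s hs]
    have hr : (0:ℝ) < (s+b)/b := div_pos (by linarith) hb0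
    rw [neg_add, Real.exp_add,
      show Real.exp (-Real.log ((s+b)/b)) = b/(s+b) by
        rw [Real.exp_neg, Real.exp_log hr, inv_div]]
    ring
  refine ⟨⟨Ψ 0 * Real.exp (-L) * b, by positivity, hmain⟩, ?_⟩
  intro hint
  set C : ℝ := Ψ 0 * Real.exp (-L) * b with hC_def
  have hC : 0 < C := by positivity
  have hev : ∀ᶠ s in atTop, C/2 ≤ Ψ s * s :=
    hmain.eventually (eventually_ge_nhds (by linarith))
  obtain ⟨Y0, hY0⟩ := eventually_atTop.1 (hev.and (eventually_ge_atTop 1))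
  set Y : ℝ := max Y0 1 with hY_def
  have hY1 : 1 ≤ Y := le_max_right _ _
  have hY0' : 0 < Y := lt_of_lt_of_le one_pos hY1
  have hkey : ∀ s ∈ Ioi Y, C/2 * s⁻¹ ≤ Ψ s := by
    intro s hs
    have hsY : Y < s := hs
    have hs1 : 1 ≤ s := le_trans hY1 hsY.le
    have hs0 : 0 < s := lt_of_lt_of_le one_pos hs1
    obtain ⟨h1, -⟩ := hY0 s (le_trans (le_max_left _ _) hsY.le)
    have h2 := mul_le_mul_of_nonneg_right h1 (inv_nonneg.2 hs0.le)
    rwa [mul_assoc, mul_inv_cancel₀ hs0.ne', mul_one] at h2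
  have hΨint : IntegrableOn Ψ (Ioi Y) := hint.mono_set (Ioi_subset_Ioi hY0'.le)
  have hhalf : IntegrableOn (fun s : ℝ => C/2 * s⁻¹) (Ioi Y) := by
    apply Integrable.mono' hΨint
    · apply ContinuousOn.aestronglyMeasurable _ measurableSet_Ioi
      exact continuousOn_const.mul
        (continuousOn_id.inv₀ (fun s hs => (lt_trans hY0' hs).ne'))
    · filter_upwards [ae_restrict_mem measurableSet_Ioi] with s hs
      have hs0 : 0 < s := lt_trans hY0' hs
      rw [Real.norm_of_nonneg (mul_nonneg (by linarith : (0:ℝ) ≤ C/2) (inv_nonneg.2 hs0.le))]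
      exact hkey s hs
  have h2 := hhalf.const_mul (2/C)
  have heq2 : (fun s : ℝ => (2/C) * (C/2 * s⁻¹)) = fun s : ℝ => s⁻¹ := by
    funext s
    rcases eq_or_ne s 0 with rfl | hs
    · simp
    · field_simp
  rw [heq2] at h2
  have h3 : IntegrableOn (fun s : ℝ => s ^ (-1 : ℝ)) (Ioi Y) :=
    IntegrableOn.congr_fun h2 (fun s _ => (Real.rpow_neg_one s).symm) measurableSet_Ioi
  have h4 := (integrableOn_Ioi_rpow_iff hY0').1 h3
  norm_num at h4
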